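/- Let a₁, a₂, …, a_k be positive integers with gcd(a₁,…,a_k) = 1 and let μ be a positive integer. Then the μ-th power sum of the nonrepresentable integers satisfies ∑_{n ∈ NR} n^μ = ∑_{κ=0}^{μ} ∑_{j=1}^{κ+1} C(μ,κ) C(κ+1,j) ((−1)^{j−1}/(κ+1)) a₁^{κ−j} B_{κ−j+1} ∑_{i=1}^{a₁−1} (m_i − i)^{j} m_i^{μ−κ}, where B_n are the Bernoulli numbers. -/

import Mathlib

open Finset

private lemma power_sylvester_aux_alg (A : ℕ) (hA : 0 < A) (μ q i mi : ℕ)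
    (hmi : (mi : ℚ) = i + q * A) :
    ∑ s ∈ range q, ((i : ℚ) + s * A) ^ μ =
    ∑ κ ∈ range (μ + 1), ∑ j ∈ Finset.Icc 1 (κ + 1),
      (μ.choose κ : ℚ) * ((κ + 1).choose j : ℚ) * ((-1 : ℚ) ^ (j - 1) / (κ + 1)) *
        (A : ℚ) ^ ((κ : ℤ) - (j : ℤ)) * bernoulli (κ + 1 - j) *
        (((mi : ℚ) - i) ^ j * (mi : ℚ) ^ (μ - κ)) := by
  have hAq : (A : ℚ) ≠ 0 := by positivity
  -- Step 1: reflect and binomially expand the LHS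
  have step1 : ∑ s ∈ range q, ((i : ℚ) + s * A) ^ μ =
      ∑ κ ∈ range (μ + 1), (μ.choose κ : ℚ) * (-1) ^ κ * (A : ℚ) ^ κ * (mi : ℚ) ^ (μ - κ) *
        ∑ t ∈ Ico 1 (q + 1), (t : ℚ) ^ κ := by
    rw [← Finset.sum_range_reflect]
    have h1 : ∀ s ∈ range q, ((i : ℚ) + (q - 1 - s : ℕ) * A) ^ μ =
        ∑ κ ∈ range (μ + 1), (-(((s : ℚ) + 1) * A)) ^ κ * (mi : ℚ) ^ (μ - κ) * (μ.choose κ : ℚ) := by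
      intro s hs
      have hs' : s + 1 ≤ q := mem_range.mp hs
      have hc : ((q - 1 - s : ℕ) : ℚ) = (q : ℚ) - ((s : ℚ) + 1) := by
        have h : q - 1 - s = q - (s + 1) := by omega
        rw [h, Nat.cast_sub hs']
        push_cast
        ring
      rw [hc]
      have : (i : ℚ) + ((q : ℚ) - ((s : ℚ) + 1)) * A = -(((s : ℚ) + 1) * A) + mi := by
        rw [hmi]; ring
      rw [this, add_pow]
    rw [Finset.sum_congr rfl h1, Finset.sum_comm]
    refine Finset.sum_congr rfl fun κ _ => ?_
    have h2 : ∑ t ∈ Ico 1 (q + 1), (t : ℚ) ^ κ = ∑ s ∈ range q, ((s : ℚ) + 1) ^ κ := by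
      rw [Finset.sum_Ico_eq_sum_range]
      simp only [Nat.add_sub_cancel]
      exact Finset.sum_congr rfl fun s _ => by push_cast; ring
    rw [h2, Finset.mul_sum]
    refine Finset.sum_congr rfl fun s _ => ?_
    rw [neg_pow, mul_pow]
    ring
  rw [step1]
  refine Finset.sum_congr rfl fun κ hκ => ?_
  -- Step 2: Faulhaber on the inner sum
  rw [show q = q + 1 - 1 from rfl, sum_Ico_pow]
  -- Step 3: reflect the bernoulli' sum and match with the Icc sum
  rw [Finset.mul_sum, ← Finset.sum_range_reflect]
  have hIcc : Finset.Icc 1 (κ + 1) = Finset.Ico 1 (κ + 2) := by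
    rw [← Finset.Ico_add_one_right_eq_Icc]; rfl
  rw [hIcc, Finset.sum_Ico_eq_sum_range]
  have hlen : κ + 2 - 1 = κ + 1 := rfl
  rw [hlen]
  refine Finset.sum_congr rfl fun ι hι => ?_
  have hικ : ι ≤ κ := Nat.lt_succ_iff.mp (mem_range.mp hι)
  have e1 : κ + 1 - 1 - ι = κ - ι := by omega
  have e2 : κ + 1 - (1 + ι) = κ - ι := by omega
  have e3 : 1 + ι - 1 = ι := by omega
  have e4 : κ + 1 - (κ - ι) = ι + 1 := by omega
  rw [e1, e2, e3, e4]
  have hmiq : (mi : ℚ) - i = (q : ℚ) * A := by rw [hmi]; ring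
  have hchoose : (κ + 1).choose (κ - ι) = (κ + 1).choose (1 + ι) := by
    have : κ - ι = κ + 1 - (1 + ι) := by omega
    rw [this, Nat.choose_symm (by omega)]
  have hbern : bernoulli' (κ - ι) = (-1 : ℚ) ^ (κ - ι) * bernoulli (κ - ι) :=
    bernoulli'_eq_bernoulli _
  have hz : (A : ℚ) ^ ((κ : ℤ) - ((1 + ι : ℕ) : ℤ)) = (A : ℚ) ^ κ * ((A : ℚ) ^ (1 + ι))⁻¹ := by
    rw [zpow_sub₀ hAq, zpow_natCast, zpow_natCast, div_eq_mul_inv]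
  have hsign : (-1 : ℚ) ^ κ = (-1 : ℚ) ^ ι * (-1 : ℚ) ^ (κ - ι) := by
    rw [← pow_add, Nat.add_sub_cancel' hικ]
  rw [hbern, hchoose, hmiq, hz, hsign, mul_pow]
  have hκ1 : ((κ : ℚ) + 1) ≠ 0 := by positivity
  have hApow : ((A : ℚ) ^ (1 + ι)) ≠ 0 := by positivity
  push_cast
  field_simp
  ring_nf
  have hsq : ((-1 : ℚ) ^ (κ - ι)) ^ 2 = 1 := by
    rw [← pow_mul, mul_comm, pow_mul, neg_one_sq, one_pow]
  simp [pow_mul, hsq]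

/-- the μ-th power sum of the nonrepresentable integers, in terms of the
Bernoulli numbers `B_n` (with `B₁ = -1/2`, i.e. Mathlib's `bernoulli`). -/
theorem power_sylvester_sum
    (k : ℕ) (hk : 0 < k) (a : Fin k → ℕ) (ha : ∀ i, 0 < a i)
    (hgcd : Finset.univ.gcd a = 1) (μ : ℕ) (hμ : 0 < μ)
    (m : ℕ → ℕ)
    (hm : ∀ i, 1 ≤ i → i < a ⟨0, hk⟩ →
      0 < m i ∧ (∃ x : Fin k → ℕ, m i = ∑ j, x j * a j) ∧ m i % a ⟨0, hk⟩ = i ∧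
        ∀ n : ℕ, 0 < n → (∃ x : Fin k → ℕ, n = ∑ j, x j * a j) → n % a ⟨0, hk⟩ = i →
          m i ≤ n) :
    ∑ᶠ n ∈ {n : ℕ | 0 < n ∧ ¬∃ x : Fin k → ℕ, n = ∑ j, x j * a j}, (n : ℚ) ^ μ =
      ∑ κ ∈ Finset.range (μ + 1), ∑ j ∈ Finset.Icc 1 (κ + 1),
        (μ.choose κ : ℚ) * ((κ + 1).choose j : ℚ) * ((-1 : ℚ) ^ (j - 1) / (κ + 1)) *
          (a ⟨0, hk⟩ : ℚ) ^ ((κ : ℤ) - (j : ℤ)) * bernoulli (κ + 1 - j) *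
          ∑ i ∈ Finset.Ico 1 (a ⟨0, hk⟩), ((m i : ℚ) - (i : ℚ)) ^ j * (m i : ℚ) ^ (μ - κ) := by
  classical
  set i0 : Fin k := ⟨0, hk⟩ with hi0
  set A := a i0 with hAdef
  have hApos : 0 < A := ha i0
  -- multiples of A are representable
  have hrep_mulA : ∀ t : ℕ, ∃ x : Fin k → ℕ, t * A = ∑ j, x j * a j := by
    intro t
    refine ⟨fun j => if j = i0 then t else 0, ?_⟩
    rw [Finset.sum_eq_single i0]
    · simp; exact Or.inl rfl
    · intro b _ hb; simp [hb]
    · simp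
  -- representable numbers are closed under adding multiples of A
  have hrep_add : ∀ n t : ℕ, (∃ x : Fin k → ℕ, n = ∑ j, x j * a j) →
      ∃ x : Fin k → ℕ, n + t * A = ∑ j, x j * a j := by
    rintro n t ⟨x, hx⟩
    refine ⟨fun j => x j + if j = i0 then t else 0, ?_⟩
    have hterm : ∀ j : Fin k, (x j + if j = i0 then t else 0) * a j
        = x j * a j + (if j = i0 then t * A else 0) := by
      intro j
      by_cases h : j = i0
      · subst h; simp [add_mul]; exact Or.inl rfl
      · simp [h]
    simp only [hterm, Finset.sum_add_distrib, Finset.sum_ite_eq' Finset.univ i0,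
      Finset.mem_univ, if_true, ← hx]
  -- if n ≥ m (n % A) with nonzero residue, then n is representable
  have hrep_of_ge : ∀ n : ℕ, n % A ≠ 0 → m (n % A) ≤ n →
      ∃ x : Fin k → ℕ, n = ∑ j, x j * a j := by
    intro n hi hge
    have hiA : n % A < A := Nat.mod_lt _ hApos
    obtain ⟨hm0, hrep, hmod, -⟩ := hm (n % A) (Nat.one_le_iff_ne_zero.mpr hi) hiA
    have hmodeq : m (n % A) ≡ n [MOD A] := by
      unfold Nat.ModEq
      rw [hmod]
    obtain ⟨t, ht⟩ := (Nat.modEq_iff_dvd' hge).mp hmodeq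
    have hn : n = m (n % A) + t * A := by rw [Nat.mul_comm t A]; omega
    rw [hn]
    exact hrep_add _ t hrep
  -- the finite set of nonrepresentable numbers
  set F : Finset ℕ := (Finset.Ico 1 A).biUnion
    (fun i => (Finset.range (m i / A)).image (fun s => i + s * A)) with hF
  have hmodF : ∀ i s : ℕ, i < A → (i + s * A) % A = i := by
    intro i s hiA
    rw [Nat.add_mul_mod_self_right, Nat.mod_eq_of_lt hiA]
  have hmieq : ∀ i : ℕ, 1 ≤ i → i < A → m i = i + (m i / A) * A := by
    intro i h1 h2
    obtain ⟨-, -, hmod, -⟩ := hm i h1 h2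
    have := Nat.mod_add_div' (m i) A
    omega
  have hset : {n : ℕ | 0 < n ∧ ¬∃ x : Fin k → ℕ, n = ∑ j, x j * a j} = ↑F := by
    ext n
    simp only [Set.mem_setOf_eq, hF, Finset.coe_biUnion, Finset.mem_coe, Finset.mem_biUnion,
      Finset.mem_image, Finset.mem_range, Finset.mem_Ico, Set.mem_iUnion]
    constructor
    · rintro ⟨hn, hnr⟩
      have hi : n % A ≠ 0 := by
        intro h
        refine hnr ?_
        have : n = (n / A) * A := by
          rw [Nat.div_mul_cancel (Nat.dvd_of_mod_eq_zero h)]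
        rw [this]
        exact hrep_mulA _
      have hiA : n % A < A := Nat.mod_lt _ hApos
      have hlt : n < m (n % A) := by
        by_contra h
        exact hnr (hrep_of_ge n hi (le_of_not_gt h))
      refine ⟨n % A, ⟨Nat.one_le_iff_ne_zero.mpr hi, hiA⟩, n / A, ?_, ?_⟩
      · -- n / A < m (n % A) / A
        have h1 := Nat.mod_add_div' n A
        have h2 := hmieq (n % A) (Nat.one_le_iff_ne_zero.mpr hi) hiA
        have h4 : (n / A) * A < (m (n % A) / A) * A := by omega
        exact Nat.lt_of_mul_lt_mul_right h4
      · have := Nat.mod_add_div' n A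
        omega
    · rintro ⟨i, ⟨h1, h2⟩, s, hs, rfl⟩
      refine ⟨by omega, ?_⟩
      rintro hrep
      obtain ⟨-, -, -, hmin⟩ := hm i h1 h2
      have hle := hmin (i + s * A) (by omega) hrep (hmodF i s h2)
      have hmi := hmieq i h1 h2
      have : s * A < (m i / A) * A := Nat.mul_lt_mul_right hApos |>.mpr hs
      omega
  rw [hset, finsum_mem_coe_finset]
  -- disjointness of the residue classes
  have hdisj : (↑(Finset.Ico 1 A) : Set ℕ).PairwiseDisjoint
      (fun i => (Finset.range (m i / A)).image (fun s => i + s * A)) := by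
    intro i hi i' hi' hne
    simp only [Finset.coe_Ico, Set.mem_Ico] at hi hi'
    simp only [Function.onFun, Finset.disjoint_left]
    rintro n hn hn'
    simp only [Finset.mem_image, Finset.mem_range] at hn hn'
    obtain ⟨s, -, rfl⟩ := hn
    obtain ⟨s', -, h⟩ := hn'
    apply hne
    have e1 := hmodF i s hi.2
    have e2 := hmodF i' s' hi'.2
    rw [h] at e2
    omega
  rw [Finset.sum_biUnion hdisj]
  -- evaluate each inner sum via the algebraic lemma
  have hinner : ∀ i ∈ Finset.Ico 1 A,
      ∑ n ∈ (Finset.range (m i / A)).image (fun s => i + s * A), (n : ℚ) ^ μ =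
      ∑ κ ∈ range (μ + 1), ∑ j ∈ Finset.Icc 1 (κ + 1),
        (μ.choose κ : ℚ) * ((κ + 1).choose j : ℚ) * ((-1 : ℚ) ^ (j - 1) / (κ + 1)) *
          (A : ℚ) ^ ((κ : ℤ) - (j : ℤ)) * bernoulli (κ + 1 - j) *
          (((m i : ℚ) - i) ^ j * (m i : ℚ) ^ (μ - κ)) := by
    intro i hi
    simp only [Finset.mem_Ico] at hi
    rw [Finset.sum_image (by
      intro s _ s' _ h
      have : s * A = s' * A := by simp only at h; omega
      exact Nat.eq_of_mul_eq_mul_right hApos this)]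
    have hcast : ∀ s ∈ Finset.range (m i / A),
        (((i + s * A : ℕ) : ℚ)) ^ μ = ((i : ℚ) + s * A) ^ μ := by
      intro s _; push_cast; ring
    rw [Finset.sum_congr rfl hcast]
    refine power_sylvester_aux_alg A hApos μ (m i / A) i (m i) ?_
    conv_lhs => rw [hmieq i hi.1 hi.2]
    push_cast
    ring
  rw [Finset.sum_congr rfl hinner]
  -- rearrange the triple sum
  rw [Finset.sum_comm]
  refine Finset.sum_congr rfl fun κ _ => ?_
  rw [Finset.sum_comm]
  refine Finset.sum_congr rfl fun j _ => ?_
  rw [Finset.mul_sum]
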